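/- Let Δ = {δ₁,…,δ_k} be a partition of {1,…,n} with |δ_j| = n_j. The n-dimensional Lebesgue volume of the set H = {x ∈ ℝⁿ : ∑_{δ∈Δ} sqrt(∑_{d∈δ} x_d²) ≤ r} equals (r^n / n!) · ∏_{δ∈Δ} ( n_δ! · π^{n_δ/2} / Γ(n_δ/2 + 1) ). -/

import Mathlib

open Real MeasureTheory Pointwise

section curry

variable {α : Type*} [Fintype α] {β : α → Type*} [∀ a, Fintype (β a)]

/-- Currying as a measurable equivalence. -/
def sigmaCurryMeasurableEquiv : ((Σ a, β a) → ℝ) ≃ᵐ (∀ a, β a → ℝ) where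
  toEquiv := Equiv.piCurry fun _ _ => ℝ
  measurable_toFun := measurable_pi_lambda _ fun _ => measurable_pi_lambda _ fun _ =>
    measurable_pi_apply _
  measurable_invFun := measurable_pi_lambda _ fun p =>
    (measurable_pi_apply p.2).comp (measurable_pi_apply p.1)

lemma measurePreserving_sigmaCurry_symm :
    MeasurePreserving (sigmaCurryMeasurableEquiv (β := β)).symm volume volume := by
  refine ⟨(sigmaCurryMeasurableEquiv (β := β)).symm.measurable, ?_⟩
  rw [show (volume : Measure ((Σ a, β a) → ℝ)) = Measure.pi fun _ => volume from rfl]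
  refine (Measure.pi_eq fun s _ => ?_).symm
  rw [MeasurableEquiv.map_apply]
  have hpre : (sigmaCurryMeasurableEquiv (β := β)).symm ⁻¹' Set.univ.pi s
      = Set.univ.pi fun a => Set.univ.pi fun b => s ⟨a, b⟩ := by
    ext g
    simp [sigmaCurryMeasurableEquiv, Sigma.uncurry, Set.mem_pi, Sigma.forall]
  rw [hpre, volume_pi_pi]
  simp_rw [volume_pi_pi]
  rw [← Finset.univ_sigma_univ, Finset.prod_sigma]

end curry

lemma integral_exp_neg_norm_euclidean (ι : Type*) [Fintype ι] [Nonempty ι] :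
    (∫ x : EuclideanSpace ℝ ι, Real.exp (-‖x‖)) =
      (Nat.factorial (Fintype.card ι) : ℝ) *
        (Real.sqrt π ^ Fintype.card ι / Real.Gamma (Fintype.card ι / 2 + 1)) := by
  have h := MeasureTheory.measure_unitBall_eq_integral_div_gamma
    (volume : Measure (EuclideanSpace ℝ ι)) one_pos
  rw [EuclideanSpace.volume_ball ι 0 1] at h
  simp only [Real.rpow_one, finrank_euclideanSpace, div_one, ENNReal.ofReal_one, one_pow,
    one_mul] at h
  have h0 : (0:ℝ) ≤ ∫ x : EuclideanSpace ℝ ι, Real.exp (-‖x‖) :=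
    integral_nonneg fun x => (Real.exp_pos _).le
  have hg : 0 < Real.Gamma ((Fintype.card ι : ℝ) + 1) :=
    Real.Gamma_pos_of_pos (by positivity)
  have hg2 : 0 < Real.Gamma ((Fintype.card ι : ℝ) / 2 + 1) :=
    Real.Gamma_pos_of_pos (by positivity)
  rw [eq_comm] at h
  rw [ENNReal.ofReal_eq_ofReal_iff (div_nonneg h0 hg.le)
    (div_nonneg (pow_nonneg (Real.sqrt_nonneg _) _) hg2.le), div_eq_iff hg.ne'] at h
  rw [h, Real.Gamma_nat_eq_factorial, mul_comm]

lemma integral_exp_neg_sqrt_sum (ι : Type*) [Fintype ι] [Nonempty ι] :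
    (∫ x : ι → ℝ, Real.exp (-Real.sqrt (∑ i, x i ^ 2))) =
      (Nat.factorial (Fintype.card ι) : ℝ) *
        (Real.sqrt π ^ Fintype.card ι / Real.Gamma (Fintype.card ι / 2 + 1)) := by
  rw [← integral_exp_neg_norm_euclidean ι,
    ← (EuclideanSpace.volume_preserving_symm_measurableEquiv_toLp ι).integral_comp'
      (fun y : ι → ℝ => Real.exp (-Real.sqrt (∑ i, y i ^ 2)))]
  congr 1
  funext x
  rw [EuclideanSpace.norm_eq]
  simp only [Real.norm_eq_abs, sq_abs]
  rfl

/-- The restriction of `x : Fin n → ℝ` to a block, as a point of Euclidean space. -/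
def blkFun {n : ℕ} (δ : Finset (Fin n)) (x : Fin n → ℝ) : EuclideanSpace ℝ ↥δ :=
  WithLp.toLp 2 (fun d => x d)

lemma sqrt_sum_eq_norm_blkFun {n : ℕ} (δ : Finset (Fin n)) (x : Fin n → ℝ) :
    Real.sqrt (∑ d ∈ δ, x d ^ 2) = ‖blkFun δ x‖ := by
  rw [EuclideanSpace.norm_eq]
  simp only [Real.norm_eq_abs, sq_abs]
  rw [show ∑ d : ↥δ, blkFun δ x d ^ 2 = ∑ d ∈ δ, x d ^ 2 from
    Finset.sum_coe_sort δ fun d => x d ^ 2]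

/-- Volume of the hyperball of radius r under the unweighted combined metric. -/
theorem volume_combined_ball (n : ℕ) (Δ : Finset (Finset (Fin n)))
    (hne : ∀ δ ∈ Δ, δ.Nonempty)
    (hdisj : ∀ δ₁ ∈ Δ, ∀ δ₂ ∈ Δ, δ₁ ≠ δ₂ → Disjoint δ₁ δ₂)
    (hcov : ∀ d : Fin n, ∃ δ ∈ Δ, d ∈ δ)
    (r : ℝ) (hr : 0 ≤ r) :
    volume {x : Fin n → ℝ | (∑ δ ∈ Δ, Real.sqrt (∑ d ∈ δ, x d ^ 2)) ≤ r}
      = ENNReal.ofReal (r ^ n / (Nat.factorial n : ℝ) *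
          ∏ δ ∈ Δ, ((Nat.factorial δ.card : ℝ) * π ^ ((δ.card : ℝ) / 2) /
            Real.Gamma ((δ.card : ℝ) / 2 + 1))) := by
  classical
  rcases Nat.eq_zero_or_pos n with hn | hn
  · subst hn
    have hΔ : Δ = ∅ := Finset.eq_empty_of_forall_notMem fun δ hδ =>
      (hne δ hδ).elim fun d _ => d.elim0
    subst hΔ
    simp only [Finset.sum_empty, Finset.prod_empty, pow_zero, Nat.factorial_zero, Nat.cast_one,
      mul_one, div_one]
    have hset : {x : Fin 0 → ℝ | (0:ℝ) ≤ r} = Set.univ := Set.eq_univ_of_forall fun _ => hr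
    rw [hset, volume_pi, Measure.pi_univ]
    simp
  · haveI : Nonempty (Fin n) := ⟨⟨0, hn⟩⟩
    set g : (Fin n → ℝ) → ℝ := fun x => ∑ δ ∈ Δ, Real.sqrt (∑ d ∈ δ, x d ^ 2) with hg_def
    have hgoal : {x : Fin n → ℝ | (∑ δ ∈ Δ, Real.sqrt (∑ d ∈ δ, x d ^ 2)) ≤ r}
        = {x : Fin n → ℝ | g x ≤ r} := by
      ext x; simp only [Set.mem_setOf_eq, hg_def]
    rw [hgoal]
    have hg_nonneg : ∀ x, 0 ≤ g x := fun x => Finset.sum_nonneg fun δ _ => Real.sqrt_nonneg _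
    have hg0 : g 0 = 0 := by simp [hg_def]
    have hg_neg : ∀ x : Fin n → ℝ, g (-x) = g x := by intro x; simp [hg_def]
    have hg_add : ∀ x y : Fin n → ℝ, g (x + y) ≤ g x + g y := by
      intro x y
      simp only [hg_def]
      rw [← Finset.sum_add_distrib]
      refine Finset.sum_le_sum fun δ _ => ?_
      rw [sqrt_sum_eq_norm_blkFun, sqrt_sum_eq_norm_blkFun, sqrt_sum_eq_norm_blkFun,
        show blkFun δ (x + y) = blkFun δ x + blkFun δ y from rfl]
      exact norm_add_le _ _
    have hg_smul : ∀ (c : ℝ) (x : Fin n → ℝ), g (c • x) = |c| * g x := by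
      intro c x
      simp only [hg_def]
      rw [Finset.mul_sum]
      refine Finset.sum_congr rfl fun δ _ => ?_
      rw [sqrt_sum_eq_norm_blkFun, sqrt_sum_eq_norm_blkFun,
        show blkFun δ (c • x) = c • blkFun δ x from rfl, norm_smul, Real.norm_eq_abs]
    have hg_eq_zero : ∀ {x : Fin n → ℝ}, g x = 0 → x = 0 := by
      intro x hx
      simp only [hg_def] at hx
      have h := (Finset.sum_eq_zero_iff_of_nonneg
        (fun δ _ => Real.sqrt_nonneg _)).mp hx
      funext d
      obtain ⟨δ, hδ, hd⟩ := hcov d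
      have h2 := h δ hδ
      rw [sqrt_sum_eq_norm_blkFun] at h2
      have h3 : blkFun δ x = 0 := norm_eq_zero.mp h2
      have h4 := congrArg (fun f : EuclideanSpace ℝ ↥δ => f ⟨d, hd⟩) h3
      simpa [blkFun] using h4
    have key1 : ∀ R : ℝ, volume {x : Fin n → ℝ | g x ≤ R} = volume {x : Fin n → ℝ | g x < R} :=
      fun R => MeasureTheory.measure_le_eq_lt volume hg0 hg_neg hg_add
        (fun {x} hx => hg_eq_zero hx) (fun c x => le_of_eq (hg_smul c x)) R
    rcases eq_or_lt_of_le hr with hr0 | hrpos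
    · rw [key1 r, ← hr0]
      have hempty : {x : Fin n → ℝ | g x < 0} = ∅ := by
        ext x; simp only [Set.mem_setOf_eq, Set.mem_empty_iff_false, iff_false, not_lt]
        exact hg_nonneg x
      rw [hempty, measure_empty, zero_pow hn.ne', zero_div, zero_mul, ENNReal.ofReal_zero]
    · -- r > 0
      have key2 := MeasureTheory.measure_lt_one_eq_integral_div_gamma volume hg0 hg_neg hg_add
        (fun {x} hx => hg_eq_zero hx) (fun c x => le_of_eq (hg_smul c x)) one_pos
      simp only [Real.rpow_one, Module.finrank_pi, Fintype.card_fin, div_one] at key2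
      -- the equivalence between the sigma type of the partition and `Fin n`
      have hbij : Function.Bijective
          (fun p : (Σ δ : {δ // δ ∈ Δ}, {d // d ∈ δ.1}) => p.2.1) := by
        constructor
        · rintro ⟨⟨δ₁, h₁⟩, d₁, hd₁⟩ ⟨⟨δ₂, h₂⟩, d₂, hd₂⟩ h
          simp only at h
          subst h
          have hδ : δ₁ = δ₂ := by
            by_contra hne'
            exact Finset.disjoint_left.mp (hdisj δ₁ h₁ δ₂ h₂ hne') hd₁ hd₂
          subst hδ
          rfl
        · intro d
          obtain ⟨δ, hδ, hd⟩ := hcov d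
          exact ⟨⟨⟨δ, hδ⟩, d, hd⟩, rfl⟩
      set e : (Σ δ : {δ // δ ∈ Δ}, {d // d ∈ δ.1}) ≃ Fin n := Equiv.ofBijective _ hbij with he_def
      have hint : (∫ x : Fin n → ℝ, Real.exp (-g x)) =
          ∏ δ ∈ Δ, ((Nat.factorial δ.card : ℝ) *
            (Real.sqrt π ^ δ.card / Real.Gamma (δ.card / 2 + 1))) := by
        have step1 := (volume_measurePreserving_piCongrLeft (fun _ : Fin n => ℝ) e).integral_comp'
          (fun x => Real.exp (-g x))
        have step2 := measurePreserving_sigmaCurry_symm.integral_comp'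
          (fun h : (Σ δ : {δ // δ ∈ Δ}, {d // d ∈ δ.1}) → ℝ =>
            Real.exp (-g ((MeasurableEquiv.piCongrLeft (fun _ : Fin n => ℝ) e) h)))
        rw [← step1, ← step2]
        have hpt : ∀ y : ∀ δ : {δ // δ ∈ Δ}, ({d // d ∈ δ.1} → ℝ),
            Real.exp (-g ((MeasurableEquiv.piCongrLeft (fun _ : Fin n => ℝ) e)
                ((sigmaCurryMeasurableEquiv).symm y)))
              = ∏ δ : {δ // δ ∈ Δ}, Real.exp (-Real.sqrt (∑ d, (y δ d) ^ 2)) := by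
          intro y
          rw [← Real.exp_sum]
          congr 1
          rw [Finset.sum_neg_distrib, neg_inj]
          simp only [hg_def]
          rw [← Finset.sum_coe_sort Δ (fun δ => Real.sqrt (∑ d ∈ δ,
            ((MeasurableEquiv.piCongrLeft (fun _ : Fin n => ℝ) e)
              ((sigmaCurryMeasurableEquiv).symm y)) d ^ 2))]
          refine Finset.sum_congr rfl fun δ _ => ?_
          congr 1
          rw [← Finset.sum_coe_sort (δ.1 : Finset (Fin n)) (fun d =>
            ((MeasurableEquiv.piCongrLeft (fun _ : Fin n => ℝ) e)
              ((sigmaCurryMeasurableEquiv).symm y)) d ^ 2)]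
          refine Finset.sum_congr rfl fun d _ => ?_
          congr 1
          rw [show (↑d : Fin n) = e ⟨δ, d⟩ from rfl, MeasurableEquiv.coe_piCongrLeft,
            Equiv.piCongrLeft_apply_apply]
          rfl
        simp_rw [hpt]
        rw [MeasureTheory.integral_fintype_prod_volume_eq_prod
          (fun (δ : {δ // δ ∈ Δ}) (z : {d // d ∈ δ.1} → ℝ) =>
            Real.exp (-Real.sqrt (∑ d, z d ^ 2)))]
        rw [← Finset.prod_coe_sort Δ (fun δ => (Nat.factorial δ.card : ℝ) *
          (Real.sqrt π ^ δ.card / Real.Gamma (δ.card / 2 + 1)))]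
        refine Finset.prod_congr rfl fun δ _ => ?_
        haveI : Nonempty {d // d ∈ δ.1} := (hne δ.1 δ.2).to_subtype
        rw [integral_exp_neg_sqrt_sum]
        simp [Fintype.card_coe]
      -- scaling
      have hsmul : {x : Fin n → ℝ | g x ≤ r} = r • {x : Fin n → ℝ | g x ≤ 1} := by
        ext x
        rw [Set.mem_smul_set_iff_inv_smul_mem₀ (ne_of_gt hrpos)]
        simp only [Set.mem_setOf_eq, hg_smul, abs_inv, abs_of_pos hrpos]
        rw [← div_eq_inv_mul, div_le_one hrpos]
      rw [hsmul, Measure.addHaar_smul_of_nonneg volume hr, Module.finrank_pi, Fintype.card_fin,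
        key1 1, key2, hint, Real.Gamma_nat_eq_factorial,
        ← ENNReal.ofReal_mul (pow_nonneg hr n)]
      congr 1
      rw [show (∏ δ ∈ Δ, ((Nat.factorial δ.card : ℝ) *
            (Real.sqrt π ^ δ.card / Real.Gamma (δ.card / 2 + 1))))
          = ∏ δ ∈ Δ, ((Nat.factorial δ.card : ℝ) * π ^ ((δ.card : ℝ) / 2) /
            Real.Gamma ((δ.card : ℝ) / 2 + 1)) from
        Finset.prod_congr rfl fun δ _ => by
          rw [show (π : ℝ) ^ ((δ.card : ℝ) / 2) = Real.sqrt π ^ δ.card by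
            rw [Real.sqrt_eq_rpow, ← Real.rpow_natCast (π ^ ((1:ℝ)/2)) δ.card,
              ← Real.rpow_mul Real.pi_pos.le]
            congr 1
            ring, mul_div_assoc]]
      ring
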